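/- Fix real parameters M>0, l>0, and a with |a|<l, and let x₀ ∈ [x_max, π/2). Then for every continuously differentiable function u : [x₀, π/2) → ℂ with ∫_{x₀}^{π/2} (|u′(x)|² + R(x)²·|u(x)|²) dx < ∞, the Hardy-type inequality ∫_{x₀}^{π/2} (Δ₋(R(x))/(R(x)²+a²))·|u(x)|² dx ≤ 4l²·∫_{x₀}^{π/2} |u′(x)|² dx holds. -/

import Mathlib

set_option maxHeartbeats 1000000


open Real MeasureTheory Set Filter Topology

/-- Δ₋(r) = (1+r²/l²)(r²+a²) − 2Mr -/
noncomputable def Dm (M l a r : ℝ) : ℝ := (1 + r^2/l^2)*(r^2+a^2) - 2*M*r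

/-- V_σ(r) = Δ₋(r)/(r²+a²)² -/
noncomputable def Vsig (M l a r : ℝ) : ℝ := Dm M l a r / (r^2+a^2)^2

/-- Θ(α) = 1 if α>0, 0 if α≤0 -/
noncomputable def Th (α : ℝ) : ℝ := if 0 < α then 1 else 0

/-- V_junk -/
noncomputable def Vjunk (M l a α r : ℝ) : ℝ :=
  -(3*r^2*(Dm M l a r)^2/(r^2+a^2)^4)
  + Dm M l a r * (5*r^4/l^2 + 3*r^2*(1+a^2/l^2) - 4*M*r + a^2)/(r^2+a^2)^3
  - (2/l^2) * (Dm M l a r * r^2/(r^2+a^2)^2)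
  - (α/l^2) * (Dm M l a r /(r^2+a^2)^2) * Th α * a^2

/-- V_mass -/
noncomputable def Vmass (M l a α r : ℝ) : ℝ :=
  ((2-α)/l^2) * (Dm M l a r * r^2/(r^2+a^2)^2)

/-- The full potential in the tortoise coordinate, with semiclassical parameter h. -/
noncomputable def Vfull (M l a α : ℝ) (R : ℝ → ℝ) (h x : ℝ) : ℝ :=
  Vsig M l a (R x) + h^2 * (Vjunk M l a α (R x) + Vmass M l a α (R x))

/-- κ is an eigenvalue of the Dirichlet problem P_DD(h). -/
def IsDirichletEigenvalue (M l a α : ℝ) (R : ℝ → ℝ) (xmax h κ : ℝ) : Prop :=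
  ∃ u : ℝ → ℝ,
    (∃ x ∈ Set.Ico xmax (π/2), u x ≠ 0) ∧
    ContDiffOn ℝ 2 u (Set.Ico xmax (π/2)) ∧
    (∀ x ∈ Set.Ioo xmax (π/2),
      -h^2 * deriv (deriv u) x + Vfull M l a α R h x * u x = κ * u x) ∧
    u xmax = 0 ∧
    MeasureTheory.IntegrableOn (fun x => (deriv u x)^2 + (R x)^2 * (u x)^2)
      (Set.Ioo xmax (π/2))

/- ### Auxiliary lemmas -/

lemma cnormsq (z : ℂ) : ‖z‖^2 = z.re^2 + z.im^2 := by
  rw [Complex.sq_norm, Complex.normSq_apply]; ring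

lemma key_poly (M l a rm : ℝ) (hrm : 0 < rm)
    (hd : 0 < (l^2+rm^2)*(rm^2+a^2) - 2*M*l^2*rm)
    (hd' : 0 ≤ 2*rm*(rm^2+a^2) + (l^2+rm^2)*(2*rm) - 2*M*l^2)
    (r : ℝ) (hr : rm ≤ r) :
    (r - rm)^2 * (r^2+a^2) ≤ (l^2+r^2)*(r^2+a^2) - 2*M*l^2*r := by
  have hs : 0 ≤ r - rm := sub_nonneg.2 hr
  nlinarith [mul_nonneg hs hd', mul_nonneg (mul_nonneg hs hs) (mul_nonneg hs hrm.le),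
    mul_nonneg (mul_nonneg hs hs) (sq_nonneg rm), mul_nonneg (mul_nonneg hs hs) (sq_nonneg l)]

lemma crit_pos (M l a rp rmax : ℝ) (hl : 0 < l) (hrp : 0 < rp) (hrmax : rp < rmax)
    (hdm : 0 < Dm M l a rmax)
    (hmax : ∀ r ∈ Set.Ici rp, r ≠ rmax → Vsig M l a r < Vsig M l a rmax) :
    0 ≤ 2*rmax*(rmax^2+a^2) + (l^2+rmax^2)*(2*rmax) - 2*M*l^2 := by
  have hrm : 0 < rmax := hrp.trans hrmax
  have hpos : 0 < rmax^2 + a^2 := by positivity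
  set dD : ℝ := (2*rmax/l^2)*(rmax^2+a^2) + (1 + rmax^2/l^2)*(2*rmax) - 2*M with hdD
  have hD : HasDerivAt (fun r => Dm M l a r) dD rmax := by
    have h1 := (((((hasDerivAt_pow 2 rmax).div_const (l^2)).const_add 1)).mul
        ((hasDerivAt_pow 2 rmax).add_const (a^2))).sub ((hasDerivAt_id rmax).const_mul (2*M))
    have : HasDerivAt (fun r : ℝ => (1 + r^2/l^2)*(r^2+a^2) - 2*M*r) dD rmax := by
      exact h1.congr_deriv (by push_cast; ring)
    simpa [Dm] using this
  have hden : HasDerivAt (fun r : ℝ => (r^2+a^2)^2) (2*(rmax^2+a^2)^1*(2*rmax^1)) rmax :=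
    ((hasDerivAt_pow 2 rmax).add_const (a^2)).pow 2
  have hV : HasDerivAt (fun r => Vsig M l a r)
      ((dD * (rmax^2+a^2)^2 - Dm M l a rmax * (2*(rmax^2+a^2)^1*(2*rmax^1))) / ((rmax^2+a^2)^2)^2)
      rmax := by
    have := hD.div hden (by positivity)
    exact this
  have hloc : IsLocalMax (fun r => Vsig M l a r) rmax := by
    have hmem : Set.Ioi rp ∈ 𝓝 rmax := isOpen_Ioi.mem_nhds hrmax
    filter_upwards [hmem] with r hr
    rcases eq_or_ne r rmax with h | h
    · exact le_of_eq (by rw [h])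
    · exact (hmax r (mem_Ici.mpr (le_of_lt (mem_Ioi.mp hr))) h).le
  have hzero := hloc.hasDerivAt_eq_zero hV
  have hnum : dD * (rmax^2+a^2)^2 = Dm M l a rmax * (2*(rmax^2+a^2)^1*(2*rmax^1)) := by
    have hne : (((rmax^2+a^2)^2)^2 : ℝ) ≠ 0 := by positivity
    have := (div_eq_zero_iff.mp hzero).resolve_right hne
    linarith [this]
  have hdDpos : 0 < dD := by
    by_contra h
    push_neg at h
    nlinarith [mul_pos hdm (by positivity : (0:ℝ) < 2*(rmax^2+a^2)^1*(2*rmax^1)),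
      mul_nonpos_of_nonpos_of_nonneg h (by positivity : (0:ℝ) ≤ (rmax^2+a^2)^2)]
  have hl2 : (0:ℝ) < l^2 := by positivity
  have hexp : l^2 * dD = 2*rmax*(rmax^2+a^2) + (l^2+rmax^2)*(2*rmax) - 2*M*l^2 := by
    rw [hdD]; field_simp
  nlinarith [mul_pos hl2 hdDpos]

lemma amgm (L W S p p' : ℝ) (hL : 0 < L) (hW : 0 ≤ W) (hS : 0 ≤ S) (hk : S^2 ≤ L * W) :
    -(W/2 * p^2) - 2*L*p'^2 ≤ S*(2*p*p') := by
  nlinarith [sq_nonneg (S*p + 2*L*p'), mul_nonneg (sub_nonneg.2 hk) (sq_nonneg p)]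
theorem statement14 (M l a : ℝ) (hM : 0 < M) (hl : 0 < l) (ha : |a| < l)
    (rp : ℝ) (hrp : 0 < rp) (hrp0 : Dm M l a rp = 0)
    (hrppos : ∀ r, rp < r → 0 < Dm M l a r)
    (rmax : ℝ) (hrmax : rp < rmax)
    (hmax : ∀ r ∈ Set.Ici rp, r ≠ rmax → Vsig M l a r < Vsig M l a rmax)
    (R : ℝ → ℝ) (hRmono : StrictMonoOn R (Set.Iio (π/2)))
    (hRim : R '' Set.Iio (π/2) = Set.Ioi rp)
    (hRderiv : ∀ x < π/2, HasDerivAt R (Dm M l a (R x) / ((R x)^2 + a^2)) x)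
    (hRtop : Filter.Tendsto R (nhdsWithin (π/2) (Set.Iio (π/2))) Filter.atTop)
    (xmax : ℝ) (hxmax : xmax < π/2) (hRxmax : R xmax = rmax)
    (x₀ : ℝ) (hx₀ : x₀ ∈ Set.Ico xmax (π/2))
    (u : ℝ → ℂ) (hu : ContDiffOn ℝ 1 u (Set.Ico x₀ (π/2)))
    (hint : MeasureTheory.IntegrableOn
      (fun x => ‖deriv u x‖^2 + (R x)^2 * ‖u x‖^2) (Set.Ioo x₀ (π/2))) :
    (∫ x in Set.Ioo x₀ (π/2), (Dm M l a (R x) / ((R x)^2 + a^2)) * ‖u x‖^2)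
      ≤ 4 * l^2 * ∫ x in Set.Ioo x₀ (π/2), ‖deriv u x‖^2 := by
  obtain ⟨hxm0, hx₀b⟩ := hx₀
  set b : ℝ := π/2 with hbdef
  set g : ℝ → ℝ := fun x => Dm M l a (R x) / ((R x)^2 + a^2) * ‖u x‖^2 with hgdef
  set w : ℝ → ℝ := fun x => Dm M l a (R x) / ((R x)^2 + a^2) with hwdef
  -- basic facts about R
  have hRrange : ∀ x, x < b → rp < R x := by
    intro x hx
    have : R x ∈ Set.Ioi rp := by rw [← hRim]; exact ⟨x, hx, rfl⟩
    exact this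
  have hRpos : ∀ x, x < b → 0 < R x := fun x hx => hrp.trans (hRrange x hx)
  have hrm0 : 0 < rmax := hrp.trans hrmax
  have hRmono' : ∀ {x y : ℝ}, x ≤ y → y < b → R x ≤ R y := by
    intro x y hxy hyb
    rcases eq_or_lt_of_le hxy with h | h
    · rw [h]
    · exact (hRmono (mem_Iio.mpr (h.trans hyb)) (mem_Iio.mpr hyb) h).le
  have hRge : ∀ x, x₀ ≤ x → x < b → rmax ≤ R x := by
    intro x h1 h2
    have h3 := hRmono' (hxm0.trans h1) h2
    rw [hRxmax] at h3; exact h3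
  have hRgt : ∀ x, x₀ < x → x < b → rmax < R x := by
    intro x h1 h2
    have h3 := hRmono (mem_Iio.mpr (lt_trans (hxm0.trans_lt h1) h2)) (mem_Iio.mpr h2)
      (hxm0.trans_lt h1)
    rw [hRxmax] at h3; exact h3
  have hwpos : ∀ x, x < b → 0 < w x := by
    intro x hx
    have h1 : 0 < R x := hRpos x hx
    exact div_pos (hrppos _ (hRrange x hx)) (by positivity)
  -- the key pointwise inequality
  have hdm : 0 < Dm M l a rmax := hrppos rmax hrmax
  have hcrit := crit_pos M l a rp rmax hl hrp hrmax hdm hmax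
  have hkey : ∀ x, x₀ ≤ x → x < b → (R x - rmax)^2 ≤ l^2 * w x := by
    intro x h1 h2
    have hr := hRge x h1 h2
    have hRx : 0 < R x := hRpos x h2
    have hden : 0 < (R x)^2 + a^2 := by positivity
    have hdcl : 0 < (l^2+rmax^2)*(rmax^2+a^2) - 2*M*l^2*rmax := by
      have h := mul_pos (show (0:ℝ) < l^2 by positivity) hdm
      have he : l^2 * Dm M l a rmax = (l^2+rmax^2)*(rmax^2+a^2) - 2*M*l^2*rmax := by
        unfold Dm; field_simp
      linarith [he ▸ h]
    have hpoly := key_poly M l a rmax hrm0 hdcl hcrit (R x) hr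
    have hDmcl : l^2 * Dm M l a (R x) = (l^2+(R x)^2)*((R x)^2+a^2) - 2*M*l^2*(R x) := by
      unfold Dm; field_simp
    have hwe : l^2 * w x = (l^2 * Dm M l a (R x)) / ((R x)^2 + a^2) := by
      rw [hwdef]; ring
    rw [hwe, le_div_iff₀ hden, hDmcl]
    exact hpoly
  -- regularity of u
  have hcontu : ContinuousOn u (Ico x₀ b) := hu.continuousOn
  have hdiffu : ∀ x ∈ Ioo x₀ b, HasDerivAt u (deriv u x) x := by
    intro x hx
    have hxm : Ico x₀ b ∈ 𝓝 x := mem_nhds_iff.mpr ⟨Ioo x₀ b, Ioo_subset_Ico_self, isOpen_Ioo, hx⟩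
    exact ((hu.differentiableOn one_ne_zero).differentiableAt hxm).hasDerivAt
  have hcontu' : ContinuousOn (deriv u) (Ioo x₀ b) :=
    (hu.mono Ioo_subset_Ico_self).continuousOn_deriv_of_isOpen isOpen_Ioo le_rfl
  have hcontR : ∀ x, x < b → ContinuousAt R x := fun x hx =>
    (hRderiv x hx).differentiableAt.continuousAt
  have hcontw : ∀ x, x < b → ContinuousAt w x := by
    intro x hx
    have h1 : ContinuousAt R x := hcontR x hx
    have hDmc : Continuous (fun r => Dm M l a r) := by unfold Dm; fun_prop
    have hden : ((R x)^2 + a^2) ≠ 0 := by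
      have := hRpos x hx; positivity
    exact (hDmc.continuousAt.comp h1).div (((h1.pow 2)).add continuousAt_const) hden
  -- integrability
  have hgm : MeasurableSet (Ioo x₀ b) := measurableSet_Ioo
  have hB : IntegrableOn (fun x => ‖deriv u x‖^2) (Ioo x₀ b) := by
    apply hint.mono' ((measurable_deriv u).norm.pow_const 2).aestronglyMeasurable
    refine ae_restrict_of_forall_mem hgm fun x hx => ?_
    have h2 : (0:ℝ) ≤ (R x)^2 * ‖u x‖^2 := by positivity
    rw [Real.norm_eq_abs, abs_of_nonneg (by positivity)]
    linarith
  set B : ℝ := ∫ x in Ioo x₀ b, ‖deriv u x‖^2 with hBdef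
  have hBnn : 0 ≤ B := setIntegral_nonneg hgm fun x _ => by positivity
  have hgnn : ∀ x, x < b → 0 ≤ g x := by
    intro x hx
    exact mul_nonneg (hwpos x hx).le (by positivity)
  by_cases hInt : IntegrableOn g (Ioo x₀ b)
  case neg =>
    rw [integral_undef hInt]
    exact mul_nonneg (by positivity) hBnn
  case pos =>
  set C : ℝ := ∫ x in Ioo x₀ b, g x with hCdef
  have hgae : 0 ≤ᵐ[volume.restrict (Ioo x₀ b)] g :=
    ae_restrict_of_forall_mem hgm fun x hx => hgnn x hx.2
  have hgw : ∀ x, g x = w x * ‖u x‖^2 := fun x => by rw [hgdef, hwdef]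
  -- integration by parts estimate
  have hIBP : ∀ s t, x₀ < s → s < t → t < b →
      1/2 * (∫ x in Ioo s t, g x) ≤ (R t - rmax) * ‖u t‖^2 + 2*l^2 * B := by
    intro s t hs hst htb
    have hIcc : Icc s t ⊆ Ioo x₀ b := fun x hx => ⟨hs.trans_le hx.1, hx.2.trans_lt htb⟩
    have hIcc' : Icc s t ⊆ Ico x₀ b := fun x hx => ⟨(hs.trans_le hx.1).le, hx.2.trans_lt htb⟩
    have huIcc : uIcc s t = Icc s t := uIcc_of_le hst.le
    set N : ℝ → ℝ := fun y => (u y).re^2 + (u y).im^2 with hNdef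
    have hNeq : ∀ y, ‖u y‖^2 = N y := fun y => cnormsq (u y)
    set G : ℝ → ℝ := fun y => (R y - rmax) * N y with hGdef
    set G' : ℝ → ℝ := fun y => w y * N y
      + (R y - rmax) * (2*(u y).re*(deriv u y).re + 2*(u y).im*(deriv u y).im) with hG'def
    set φ : ℝ → ℝ := fun x => 1/2 * g x - 2*l^2*‖deriv u x‖^2 with hφdef
    have hGderiv : ∀ x ∈ uIcc s t, HasDerivAt G (G' x) x := by
      intro x hx
      rw [huIcc] at hx
      have hxI : x ∈ Ioo x₀ b := hIcc hx
      have hud := hdiffu x hxI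
      have hre : HasDerivAt (fun y => (u y).re) ((deriv u x).re) x := by
        exact (Complex.reCLM.hasFDerivAt.comp_hasDerivAt x hud)
      have him : HasDerivAt (fun y => (u y).im) ((deriv u x).im) x := by
        exact (Complex.imCLM.hasFDerivAt.comp_hasDerivAt x hud)
      have hN : HasDerivAt N (2*(u x).re*(deriv u x).re + 2*(u x).im*(deriv u x).im) x := by
        have h2 := (hre.pow 2).add (him.pow 2)
        exact h2.congr_deriv (by push_cast; ring)
      have hRx : HasDerivAt (fun y => R y - rmax) (w x) x := (hRderiv x hxI.2).sub_const rmax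
      exact hRx.mul hN
    -- continuity on Icc s t
    have hcw : ContinuousOn w (Icc s t) := fun x hx => (hcontw x (hIcc hx).2).continuousWithinAt
    have hcR : ContinuousOn R (Icc s t) := fun x hx => (hcontR x (hIcc hx).2).continuousWithinAt
    have hcu : ContinuousOn u (Icc s t) := hcontu.mono hIcc'
    have hcu' : ContinuousOn (deriv u) (Icc s t) := hcontu'.mono hIcc
    have hcure : ContinuousOn (fun y => (u y).re) (Icc s t) :=
      Complex.continuous_re.comp_continuousOn hcu
    have hcuim : ContinuousOn (fun y => (u y).im) (Icc s t) :=
      Complex.continuous_im.comp_continuousOn hcu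
    have hcdre : ContinuousOn (fun y => (deriv u y).re) (Icc s t) :=
      Complex.continuous_re.comp_continuousOn hcu'
    have hcdim : ContinuousOn (fun y => (deriv u y).im) (Icc s t) :=
      Complex.continuous_im.comp_continuousOn hcu'
    have hcN : ContinuousOn N (Icc s t) := (hcure.pow 2).add (hcuim.pow 2)
    have hcG' : ContinuousOn G' (Icc s t) := by
      apply (hcw.mul hcN).add
      exact (hcR.sub continuousOn_const).mul
        (((continuousOn_const.mul hcure).mul hcdre).add ((continuousOn_const.mul hcuim).mul hcdim))
    have hcg : ContinuousOn g (Icc s t) := hcw.mul ((hcu.norm).pow 2)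
    have hcφ : ContinuousOn φ (Icc s t) :=
      (continuousOn_const.mul hcg).sub (continuousOn_const.mul ((hcu'.norm).pow 2))
    have hG'i : IntervalIntegrable G' volume s t :=
      ContinuousOn.intervalIntegrable (by rw [huIcc]; exact hcG')
    have hφi : IntervalIntegrable φ volume s t :=
      ContinuousOn.intervalIntegrable (by rw [huIcc]; exact hcφ)
    have hφle : ∀ x ∈ Icc s t, φ x ≤ G' x := by
      intro x hx
      have hxI := hIcc hx
      have hkx := hkey x hxI.1.le hxI.2
      have hSx : 0 ≤ R x - rmax := sub_nonneg.2 (hRge x hxI.1.le hxI.2)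
      have hwx := hwpos x hxI.2
      have h1 := amgm (l^2) (w x) (R x - rmax) (u x).re (deriv u x).re
        (by positivity) hwx.le hSx hkx
      have h2 := amgm (l^2) (w x) (R x - rmax) (u x).im (deriv u x).im
        (by positivity) hwx.le hSx hkx
      have hn2 : ‖deriv u x‖^2 = (deriv u x).re^2 + (deriv u x).im^2 := cnormsq (deriv u x)
      have hφx : φ x = 1/2 * (w x * N x) - 2*l^2*((deriv u x).re^2 + (deriv u x).im^2) := by
        rw [hφdef]
        simp only []
        rw [hgw x, hNeq x, hn2]
      rw [hφx, hG'def]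
      simp only []
      rw [hNdef]
      simp only []
      nlinarith [h1, h2]
    have hmono := intervalIntegral.integral_mono_on hst.le hφi hG'i hφle
    have hFTC : ∫ x in s..t, G' x = G t - G s :=
      intervalIntegral.integral_eq_sub_of_hasDerivAt hGderiv hG'i
    have hgi : IntervalIntegrable (fun x => 1/2 * g x) volume s t :=
      ContinuousOn.intervalIntegrable (by rw [huIcc]; exact continuousOn_const.mul hcg)
    have hdi : IntervalIntegrable (fun x => 2*l^2*‖deriv u x‖^2) volume s t :=
      ContinuousOn.intervalIntegrable
        (by rw [huIcc]; exact continuousOn_const.mul ((hcu'.norm).pow 2))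
    have hsplit : ∫ x in s..t, φ x
        = 1/2 * (∫ x in Ioo s t, g x) - 2*l^2 * (∫ x in Ioo s t, ‖deriv u x‖^2) := by
      rw [hφdef]
      simp only []
      rw [intervalIntegral.integral_sub hgi hdi, intervalIntegral.integral_const_mul,
        intervalIntegral.integral_const_mul, intervalIntegral.integral_of_le hst.le,
        intervalIntegral.integral_of_le hst.le, integral_Ioc_eq_integral_Ioo,
        integral_Ioc_eq_integral_Ioo]
    have hGs : 0 ≤ G s := mul_nonneg (sub_nonneg.2 (hRge s hs.le (hst.trans htb)))
      (by rw [hNdef]; positivity)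
    have hI2 : ∫ x in Ioo s t, ‖deriv u x‖^2 ≤ B := by
      apply setIntegral_mono_set hB
      · exact ae_restrict_of_forall_mem hgm fun x _ => by positivity
      · exact HasSubset.Subset.eventuallyLE (fun x hx => ⟨hs.trans hx.1, hx.2.trans htb⟩)
    have hmul : 2*l^2 * (∫ x in Ioo s t, ‖deriv u x‖^2) ≤ 2*l^2 * B :=
      mul_le_mul_of_nonneg_left hI2 (by positivity)
    have hGt : G t = (R t - rmax) * ‖u t‖^2 := by rw [hGdef]; simp only []; rw [hNeq t]
    linarith [hmono, hFTC, hGs, hmul, hsplit, hGt.symm.le, hGt.le]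
  have hIooC : ∀ s t, x₀ ≤ s → t ≤ b → (∫ x in Ioo s t, g x) ≤ C := by
    intro s t h1 h2
    apply setIntegral_mono_set hInt hgae
    exact HasSubset.Subset.eventuallyLE (fun x hx => ⟨h1.trans_lt hx.1, hx.2.trans_le h2⟩)
  -- boundary smallness
  have hbound : ∀ ε, 0 < ε → ∀ t₁, x₀ ≤ t₁ → t₁ < b →
      ∃ t, t₁ < t ∧ t < b ∧ (R t - rmax) * ‖u t‖^2 < ε := by
    intro ε hε t₁ ht₁ ht₁b
    by_contra hcon
    push_neg at hcon
    set s₂ := (t₁ + b)/2 with hs₂def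
    have hs₂1 : t₁ < s₂ := by rw [hs₂def]; linarith
    have hs₂b : s₂ < b := by rw [hs₂def]; linarith
    have hx₀s₂ : x₀ < s₂ := ht₁.trans_lt hs₂1
    have hRs₂ : rmax < R s₂ := hRgt s₂ hx₀s₂ hs₂b
    have hlog : ∀ t₂, s₂ < t₂ → t₂ < b →
        ε * (Real.log (R t₂ - rmax) - Real.log (R s₂ - rmax)) ≤ C := by
      intro t₂ h1 h2
      have hIcc2 : Icc s₂ t₂ ⊆ Ioo x₀ b := fun x hx =>
        ⟨hx₀s₂.trans_le hx.1, hx.2.trans_lt h2⟩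
      have hlogd : ∀ x ∈ uIcc s₂ t₂,
          HasDerivAt (fun y => Real.log (R y - rmax)) (w x / (R x - rmax)) x := by
        intro x hx
        rw [uIcc_of_le h1.le] at hx
        have hxI := hIcc2 hx
        have hRx : rmax < R x := hRgt x hxI.1 hxI.2
        exact ((hRderiv x hxI.2).sub_const rmax).log (by linarith)
      have hcq : ContinuousOn (fun x => w x / (R x - rmax)) (Icc s₂ t₂) := by
        intro x hx
        have hxI := hIcc2 hx
        have hRx : rmax < R x := hRgt x hxI.1 hxI.2
        exact ((hcontw x hxI.2).div
          (((hcontR x hxI.2).sub continuousAt_const)) (by show R x - rmax ≠ 0; linarith)).continuousWithinAt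
      have hqi : IntervalIntegrable (fun x => w x / (R x - rmax)) volume s₂ t₂ :=
        ContinuousOn.intervalIntegrable (by rw [uIcc_of_le h1.le]; exact hcq)
      have hftc : ∫ x in s₂..t₂, w x / (R x - rmax)
          = Real.log (R t₂ - rmax) - Real.log (R s₂ - rmax) :=
        intervalIntegral.integral_eq_sub_of_hasDerivAt hlogd hqi
      have hptle : ∀ x ∈ Icc s₂ t₂, ε * (w x / (R x - rmax)) ≤ g x := by
        intro x hx
        have hxI := hIcc2 hx
        have hRx : rmax < R x := hRgt x hxI.1 hxI.2
        have hwx := hwpos x hxI.2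
        have hc := hcon x (hs₂1.trans_le hx.1) hxI.2
        have hq : 0 ≤ w x / (R x - rmax) := div_nonneg hwx.le (by linarith)
        calc ε * (w x / (R x - rmax)) ≤ ((R x - rmax) * ‖u x‖^2) * (w x / (R x - rmax)) :=
              mul_le_mul_of_nonneg_right hc hq
          _ = g x := by
              rw [hgw x]
              have hne : R x - rmax ≠ 0 := by linarith
              field_simp
      have hεqi : IntervalIntegrable (fun x => ε * (w x / (R x - rmax))) volume s₂ t₂ :=
        ContinuousOn.intervalIntegrable
          (by rw [uIcc_of_le h1.le]; exact continuousOn_const.mul hcq)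
      have hcg2 : ContinuousOn g (Icc s₂ t₂) := by
        intro x hx
        have hxI := hIcc2 hx
        exact ((hcontw x hxI.2).mul
          (((hcontu.continuousAt (mem_nhds_iff.mpr
            ⟨Ioo x₀ b, Ioo_subset_Ico_self, isOpen_Ioo, hxI⟩)).norm.pow 2))).continuousWithinAt
      have hgi2 : IntervalIntegrable g volume s₂ t₂ :=
        ContinuousOn.intervalIntegrable (by rw [uIcc_of_le h1.le]; exact hcg2)
      have hmono2 := intervalIntegral.integral_mono_on h1.le hεqi hgi2 hptle
      have heq2 : ∫ x in s₂..t₂, ε * (w x / (R x - rmax))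
          = ε * (Real.log (R t₂ - rmax) - Real.log (R s₂ - rmax)) := by
        rw [intervalIntegral.integral_const_mul, hftc]
      have hgC : ∫ x in s₂..t₂, g x ≤ C := by
        rw [intervalIntegral.integral_of_le h1.le, integral_Ioc_eq_integral_Ioo]
        exact hIooC s₂ t₂ hx₀s₂.le h2.le
      linarith
    set K := rmax + Real.exp (C/ε + |Real.log (R s₂ - rmax)| + 1) with hKdef
    have hev1 : ∀ᶠ x in 𝓝[<] b, K ≤ R x := hRtop.eventually_ge_atTop K
    have hev2 : ∀ᶠ x in 𝓝[<] b, x ∈ Ioo s₂ b :=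
      eventually_mem_set.mpr (Ioo_mem_nhdsLT_of_mem ⟨hs₂b, le_refl b⟩)
    obtain ⟨t₂, hKt₂, ht₂⟩ := (hev1.and hev2).exists
    have hexp0 : (0:ℝ) < Real.exp (C/ε + |Real.log (R s₂ - rmax)| + 1) := Real.exp_pos _
    have hRt₂ : Real.exp (C/ε + |Real.log (R s₂ - rmax)| + 1) ≤ R t₂ - rmax := by
      rw [hKdef] at hKt₂; linarith
    have hlog2 : C/ε + |Real.log (R s₂ - rmax)| + 1 ≤ Real.log (R t₂ - rmax) := by
      calc C/ε + |Real.log (R s₂ - rmax)| + 1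
          = Real.log (Real.exp (C/ε + |Real.log (R s₂ - rmax)| + 1)) := (Real.log_exp _).symm
        _ ≤ Real.log (R t₂ - rmax) := Real.log_le_log hexp0 hRt₂
    have hfin := hlog t₂ ht₂.1 ht₂.2
    have hd : C/ε + 1 ≤ Real.log (R t₂ - rmax) - Real.log (R s₂ - rmax) := by
      have := le_abs_self (Real.log (R s₂ - rmax))
      linarith
    have hmul := mul_le_mul_of_nonneg_left hd hε.le
    have hεC : ε * (C/ε + 1) = C + ε := by rw [mul_add, mul_one, mul_div_cancel₀ _ hε.ne']
    rw [hεC] at hmul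
    linarith
  -- approximation of C by integrals over compactly contained intervals
  have happrox : ∀ ε, 0 < ε →
      ∃ s t₁, x₀ < s ∧ s < t₁ ∧ t₁ < b ∧ C - ε < ∫ x in Ioo s t₁, g x := by
    intro ε hε
    set c := (b - x₀)/3 with hcdef
    have hc : 0 < c := by rw [hcdef]; linarith
    set S : ℕ → Set ℝ := fun n => Ioo (x₀ + c/(n+1)) (b - c/(n+1)) with hSdef
    have hmonoS : Monotone S := by
      intro m n hmn
      have hmn' : (m:ℝ)+1 ≤ (n:ℝ)+1 := by
        have := (Nat.cast_le (α := ℝ)).mpr hmn; linarith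
      have hdiv : c/((n:ℝ)+1) ≤ c/((m:ℝ)+1) := by
        apply div_le_div_of_nonneg_left hc.le (by positivity) hmn'
      rw [hSdef]
      exact Ioo_subset_Ioo (by linarith) (by linarith)
    have hU : ⋃ n, S n = Ioo x₀ b := by
      ext x
      simp only [hSdef, mem_iUnion, mem_Ioo]
      constructor
      · rintro ⟨n, h1, h2⟩
        have hpos : 0 < c/((n:ℝ)+1) := by positivity
        exact ⟨by linarith, by linarith⟩
      · rintro ⟨h1, h2⟩
        obtain ⟨n, hn⟩ := exists_nat_one_div_lt
          (div_pos (lt_min (show (0:ℝ) < x - x₀ by linarith) (show (0:ℝ) < b - x by linarith)) hc)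
        refine ⟨n, ?_, ?_⟩
        · have h3 : c * (1/((n:ℝ)+1)) < c * (min (x - x₀) (b - x)/c) :=
            mul_lt_mul_of_pos_left hn hc
          rw [mul_div_cancel₀ _ hc.ne'] at h3
          have h4 := min_le_left (x - x₀) (b - x)
          have h5 : c/((n:ℝ)+1) = c * (1/((n:ℝ)+1)) := by ring
          rw [h5]; linarith
        · have h3 : c * (1/((n:ℝ)+1)) < c * (min (x - x₀) (b - x)/c) :=
            mul_lt_mul_of_pos_left hn hc
          rw [mul_div_cancel₀ _ hc.ne'] at h3
          have h4 := min_le_right (x - x₀) (b - x)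
          have h5 : c/((n:ℝ)+1) = c * (1/((n:ℝ)+1)) := by ring
          rw [h5]; linarith
    have htendsto := tendsto_setIntegral_of_monotone (fun n => measurableSet_Ioo) hmonoS
      (by rw [hU]; exact hInt)
    rw [hU] at htendsto
    have hev : ∀ᶠ n in atTop, C - ε < ∫ x in S n, g x :=
      htendsto.eventually (lt_mem_nhds (show C - ε < C by linarith))
    obtain ⟨n, hn⟩ := hev.exists
    have hpos : 0 < c/((n:ℝ)+1) := by positivity
    have hcle : c/((n:ℝ)+1) ≤ c := by
      apply div_le_self hc.le
      have : (0:ℝ) ≤ (n:ℝ) := Nat.cast_nonneg n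
      linarith
    refine ⟨x₀ + c/((n:ℝ)+1), b - c/((n:ℝ)+1), by linarith, ?_, by linarith, ?_⟩
    · rw [hcdef] at hcle ⊢
      have hbx : x₀ < b := hx₀b
      linarith
    · rw [hSdef] at hn
      exact hn
  -- final assembly
  have hfinal : ∀ ε, 0 < ε → C ≤ 4*l^2*B + 3*ε := by
    intro ε hε
    obtain ⟨s, t₁, hs, hst₁, ht₁b, hCs⟩ := happrox ε hε
    obtain ⟨t, ht₁t, htb, hHt⟩ := hbound ε hε t₁ (by linarith) ht₁b
    have hsub : Ioo s t₁ ⊆ Ioo s t := Ioo_subset_Ioo le_rfl ht₁t.le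
    have hIntst : IntegrableOn g (Ioo s t) :=
      hInt.mono_set (fun x hx => ⟨hs.trans hx.1, hx.2.trans htb⟩)
    have h1 : (∫ x in Ioo s t₁, g x) ≤ ∫ x in Ioo s t, g x := by
      apply setIntegral_mono_set hIntst
        (ae_restrict_of_forall_mem measurableSet_Ioo fun x hx => hgnn x (hx.2.trans htb))
        (HasSubset.Subset.eventuallyLE hsub)
    have h2 := hIBP s t hs (hst₁.trans ht₁t) htb
    linarith
  have hCle : C ≤ 4*l^2*B := by
    by_contra hcontra
    push_neg at hcontra
    have hε : 0 < (C - 4*l^2*B)/4 := by linarith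
    have := hfinal _ hε
    linarith
  exact hCle
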